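/- arXiv:2203.03314 — 2 statements merged into one kernel-verified Lean document; each statement's English description precedes it below -/
import Mathlib

section
/- Let α, β₀ ∈ (0,1), β = β₀, β₂ = 1 - β₀, and θ₀ = ((β₂ - β₀)d + 1)/n for positive integers d, n with d < n. If β₀ > 2α and the inequality β + 3(β₀ - √(2β₀α)) < θ₀ holds together with β₀ - √(2αβ₀) ≥ √(d-1)/d, then d + 1 > 2αn. -/
theorem stmt_7 (α β₀ : ℝ) (d n : ℕ) (hd : 0 < d) (hdn : d < n)
    (hα : 0 < α) (hα1 : α < 1) (hβ₀ : 0 < β₀) (hβ₀1 : β₀ < 1)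
    (β β₂ θ₀ : ℝ) (hβ : β = β₀) (hβ₂ : β₂ = 1 - β₀)
    (hθ₀ : θ₀ = ((β₂ - β₀) * d + 1) / n)
    (h2α : β₀ > 2 * α)
    (h16 : β + 3 * (β₀ - Real.sqrt (2 * β₀ * α)) < θ₀)
    (h15 : β₀ - Real.sqrt (2 * α * β₀) ≥ Real.sqrt ((d : ℝ) - 1) / d) :
    (d : ℝ) + 1 > 2 * α * n := by
  have hn : (0:ℝ) < n := by
    have : 0 < n := lt_trans hd hdn
    exact_mod_cast this
  have hsq := Real.sq_sqrt (show (0:ℝ) ≤ 2 * β₀ * α by positivity)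
  have hnn := Real.sqrt_nonneg (2 * β₀ * α)
  have hs : Real.sqrt (2 * β₀ * α) < β₀ := by nlinarith
  have hθ : 2 * α < θ₀ := by
    rw [hβ] at h16; nlinarith
  rw [hθ₀, hβ₂] at hθ
  have := (lt_div_iff₀ hn).mp hθ
  have hd0 : (0:ℝ) ≤ (d:ℝ) := Nat.cast_nonneg d
  nlinarith
end

section
/- Let V be a finite set of n vertices with neighbor structure N : V → Finset V in a d-regular graph, β, β₀ ∈ (0,1) with β ≥ β₀, and let Z = Z(T, β₀) be the closure of T as above, with P = V \ (Z ∪ T). Consider the monotone propagation dynamics x : ℕ → V → {0,1} where a vertex i ∉ supports gets excited at time k+1 iff at least βd of its neighbors are excited at time k, faulty vertices in T may report arbitrary values, and x restricted to P is 0 at time 0. If every vertex of P has fewer than β₀d neighbors outside P, then no vertex of P is ever excited: x_i(k) = 0 for all i ∈ P and all k. -/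
theorem stmt_14 {V : Type*} [Fintype V] [DecidableEq V] (n : ℕ) (hn : Fintype.card V = n)
    (N : V → Finset V) (hN : ∀ i : V, i ∈ N i) (d : ℕ) (hd : 1 ≤ d)
    (β β₀ : ℝ) (hβ : 0 < β) (hβ1 : β < 1) (hβ₀ : 0 < β₀) (hβ₀1 : β₀ < 1)
    (hββ₀ : β ≥ β₀)
    (T Z P : Finset V) (hP : P = Finset.univ \ (Z ∪ T))
    (hout : ∀ i ∈ P, ((((N i).erase i).filter (fun j => j ∉ P)).card : ℝ) < β₀ * d)
    (x : ℕ → V → Bool)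
    (h0 : ∀ i ∈ P, x 0 i = false)
    (hdyn : ∀ k : ℕ, ∀ i : V, i ∉ T →
      (x (k + 1) i = true ↔ (x k i = true ∨
        (β * d : ℝ) ≤ ((((N i).erase i).filter (fun j => x k j = true)).card : ℝ)))) :
    ∀ k : ℕ, ∀ i ∈ P, x k i = false := by
  intro k
  induction k with
  | zero => exact h0
  | succ k ih =>
    intro i hi
    have hiT : i ∉ T := by
      rw [hP] at hi
      simp only [Finset.mem_sdiff, Finset.mem_union] at hi
      tauto
    by_contra h
    have htrue : x (k + 1) i = true := by
      cases hx : x (k + 1) i with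
      | false => exact absurd hx h
      | true => rfl
    rcases (hdyn k i hiT).mp htrue with h1 | h2
    · rw [ih i hi] at h1; exact Bool.false_ne_true h1
    · have hsub : ((N i).erase i).filter (fun j => x k j = true) ⊆
          ((N i).erase i).filter (fun j => j ∉ P) := by
        intro j hj
        simp only [Finset.mem_filter] at hj ⊢
        refine ⟨hj.1, fun hjP => ?_⟩
        rw [ih j hjP] at hj
        exact Bool.false_ne_true hj.2
      have hcard : ((((N i).erase i).filter (fun j => x k j = true)).card : ℝ) ≤
          ((((N i).erase i).filter (fun j => j ∉ P)).card : ℝ) := by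
        exact_mod_cast Finset.card_le_card hsub
      have := hout i hi
      have hβd : β₀ * d ≤ β * d := by
        apply mul_le_mul_of_nonneg_right hββ₀ (by positivity)
      linarith
end
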